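/- Every divisor of degree g on a finite connected multigraph G of genus g (with all vertex weights zero) is linearly equivalent to a break divisor. -/

import Mathlib

open scoped Classical

/-- A finite multigraph with legs: oriented edges with source `s` and target `t`,
legs rooted at vertices, and a vertex-weight (genus) function `w`. -/
structure MGraph where
  V : Type
  E : Type
  L : Type
  [fV : Fintype V]
  [fE : Fintype E]
  [fL : Fintype L]
  s : E → V
  t : E → V
  legRoot : L → V
  w : V → ℕ

attribute [instance] MGraph.fV MGraph.fE MGraph.fL

namespace MGraph

variable (G : MGraph)

/-- Adjacency via some edge. -/
def Adj (v u : G.V) : Prop :=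
  ∃ e : G.E, (G.s e = v ∧ G.t e = u) ∨ (G.s e = u ∧ G.t e = v)

/-- Connectedness of the graph. -/
def Connected : Prop :=
  Nonempty G.V ∧ ∀ v u : G.V, Relation.ReflTransGen G.Adj v u

/-- Number of edge-flags (half-edges) at a vertex; a loop contributes 2. -/
noncomputable def valE (v : G.V) : ℕ :=
  ∑ e : G.E, ((if G.s e = v then 1 else 0) + (if G.t e = v then 1 else 0))

/-- Number of legs rooted at a vertex. -/
noncomputable def nLegs (v : G.V) : ℕ :=
  (Finset.univ.filter fun l : G.L => G.legRoot l = v).card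

/-- Valence of a vertex: half-edges plus legs rooted at it. -/
noncomputable def val (v : G.V) : ℕ := G.valE v + G.nLegs v

/-- Genus `g(G) = b₁(G) + Σ_v w(v)` with `b₁(G) = |E| - |V| + 1`. -/
noncomputable def genus : ℤ :=
  (Fintype.card G.E : ℤ) - (Fintype.card G.V : ℤ) + 1 + ∑ v : G.V, (G.w v : ℤ)

/-- Exceptional vertex: weight 0 and valence 2. -/
def Exc (v : G.V) : Prop := G.w v = 0 ∧ G.val v = 2

/-- Quasi-stable graph of type `(g,n)`. -/
def QuasiStable (g n : ℕ) : Prop :=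
  G.Connected ∧ G.genus = (g : ℤ) ∧ Fintype.card G.L = n ∧
  (∀ v, G.w v = 0 → 2 ≤ G.val v) ∧
  (∀ v, G.Exc v → (∀ l : G.L, G.legRoot l ≠ v) ∧ (∀ e : G.E, G.s e = v → G.t e ≠ v)) ∧
  (∀ v u, G.Exc v → G.Exc u → v ≠ u → ¬ G.Adj v u)

/-- Stable graph of type `(g,n)`. -/
def Stable (g n : ℕ) : Prop :=
  G.Connected ∧ G.genus = (g : ℤ) ∧ Fintype.card G.L = n ∧
  ∀ v, 0 < 2 * (G.w v : ℤ) - 2 + (G.val v : ℤ)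

/-- The set `E(S, Sᶜ)` of edges joining `S` to its complement. -/
noncomputable def cut (S : Finset G.V) : Finset G.E :=
  Finset.univ.filter fun e =>
    (G.s e ∈ S ∧ G.t e ∉ S) ∨ (G.t e ∈ S ∧ G.s e ∉ S)

/-- A divisor is admissible if it takes value 1 at every exceptional vertex. -/
def Admissible (D : G.V → ℤ) : Prop := ∀ v, G.Exc v → D v = 1

/-- Degree of a divisor. -/
noncomputable def degD (D : G.V → ℤ) : ℤ := ∑ v : G.V, D v

/-- `D(S) = Σ_{v∈S} D(v)`. -/
noncomputable def divSum (D : G.V → ℤ) (S : Finset G.V) : ℤ := ∑ v ∈ S, D v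

/-- `φ(S) = Σ_{v∈S} φ(v)`. -/
noncomputable def phiSum (φ : G.V → ℝ) (S : Finset G.V) : ℝ := ∑ v ∈ S, φ v

/-- `φ`-semistability of an admissible divisor. -/
def Semistable (φ : G.V → ℝ) (D : G.V → ℤ) : Prop :=
  G.Admissible D ∧ (G.degD D : ℝ) = ∑ v : G.V, φ v ∧
  ∀ S : Finset G.V,
    G.phiSum φ S - ((G.cut S).card : ℝ) / 2 ≤ (G.divSum D S : ℝ) ∧
    (G.divSum D S : ℝ) ≤ G.phiSum φ S + ((G.cut S).card : ℝ) / 2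

end MGraph

namespace MGraph

variable (G : MGraph)

/-- Adjacency using only edges in `T`. -/
def AdjIn (T : Finset G.E) (v u : G.V) : Prop :=
  ∃ e ∈ T, (G.s e = v ∧ G.t e = u) ∨ (G.s e = u ∧ G.t e = v)

/-- `T` is a spanning tree: it connects all vertices and `|T| = |V| - 1`. -/
def IsSpanningTree (T : Finset G.E) : Prop :=
  (∀ v u : G.V, Relation.ReflTransGen (G.AdjIn T) v u) ∧ T.card + 1 = Fintype.card G.V

/-- `D` is a break divisor: `D = Σ_v h(v)·v + Σ_{e∉T} φ(e)` for a spanning tree `T`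
and a choice `φ(e)` of an endpoint of each non-tree edge `e`. -/
def IsBreakDivisor (D : G.V → ℤ) : Prop :=
  ∃ (T : Finset G.E) (φ : G.E → G.V), G.IsSpanningTree T ∧
    (∀ e ∉ T, φ e = G.s e ∨ φ e = G.t e) ∧
    ∀ v : G.V, D v = (G.w v : ℤ) + (((Finset.univ \ T).filter fun e => φ e = v).card : ℤ)

end MGraph

/-- The graph Laplacian `Δf(v) = Σ_{e=vw} (f(v) - f(w))`. -/
noncomputable def MGraph.lap (G : MGraph) (f : G.V → ℤ) (v : G.V) : ℤ :=
  ∑ e : G.E, ((if G.s e = v then f (G.s e) - f (G.t e) else 0) +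
              (if G.t e = v then f (G.t e) - f (G.s e) else 0))

namespace BreakProof

open Finset

variable (G : MGraph)

/-- Indicator function of a finset, ℤ-valued. -/
noncomputable def ind (S : Finset G.V) (v : G.V) : ℤ := if v ∈ S then 1 else 0

/-- The set of non-loop edges. -/
noncomputable def A0 : Finset G.E := Finset.univ.filter (fun e => G.s e ≠ G.t e)

/-- Loops at a vertex (as a count). -/
noncomputable def nloops (v : G.V) : ℤ :=
  ((Finset.univ.filter (fun e : G.E => G.s e = G.t e ∧ G.s e = v)).card : ℤ)

/-- Number of edges of `A` with both endpoints in `S`. -/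
noncomputable def mIn (A : Finset G.E) (S : Finset G.V) : ℤ :=
  ∑ e ∈ A, if G.s e ∈ S ∧ G.t e ∈ S then 1 else 0

/-- Number of edges of `A` with one endpoint in `X`, the other in `Y`. -/
noncomputable def eCross (A : Finset G.E) (X Y : Finset G.V) : ℤ :=
  ∑ e ∈ A, if (G.s e ∈ X ∧ G.t e ∈ Y) ∨ (G.s e ∈ Y ∧ G.t e ∈ X) then 1 else 0

/-- The excess of a set `S` for chip configuration `b` over edge set `A`. -/
noncomputable def exc (A : Finset G.E) (b : G.V → ℤ) (S : Finset G.V) : ℤ :=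
  (∑ v ∈ S, b v) - mIn G A S + (S.card : ℤ) - 1

/-- Bilinear cut form. -/
noncomputable def bilin (X S : Finset G.V) : ℤ :=
  ∑ e : G.E, (ind G X (G.s e) - ind G X (G.t e)) * (ind G S (G.s e) - ind G S (G.t e))

lemma sum_lap_eq (f : G.V → ℤ) (S : Finset G.V) :
    ∑ v ∈ S, G.lap f v
      = ∑ e : G.E, (f (G.s e) - f (G.t e)) * (ind G S (G.s e) - ind G S (G.t e)) := by
  unfold MGraph.lap
  rw [Finset.sum_comm]
  refine Finset.sum_congr rfl (fun e _ => ?_)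
  rw [Finset.sum_add_distrib, Finset.sum_ite_eq, Finset.sum_ite_eq]
  unfold ind
  by_cases h1 : G.s e ∈ S <;> by_cases h2 : G.t e ∈ S <;> simp [h1, h2] <;> ring

lemma sum_lap_univ (f : G.V → ℤ) : ∑ v, G.lap f v = 0 := by
  rw [sum_lap_eq]
  apply Finset.sum_eq_zero
  intro e _
  simp [ind]

lemma lap_sub (f g : G.V → ℤ) (v : G.V) :
    G.lap (fun w => f w - g w) v = G.lap f v - G.lap g v := by
  unfold MGraph.lap
  rw [← Finset.sum_sub_distrib]
  refine Finset.sum_congr rfl (fun e _ => ?_)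
  by_cases h1 : G.s e = v <;> by_cases h2 : G.t e = v <;> simp [h1, h2] <;> ring


lemma mIn_union_disjoint (A : Finset G.E) {X Y : Finset G.V} (h : Disjoint X Y) :
    mIn G A (X ∪ Y) = mIn G A X + mIn G A Y + eCross G A X Y := by
  unfold mIn eCross
  rw [← Finset.sum_add_distrib, ← Finset.sum_add_distrib]
  refine Finset.sum_congr rfl (fun e _ => ?_)
  have hd : ∀ w : G.V, w ∈ X → w ∈ Y → False := fun w hw1 hw2 =>
    Finset.disjoint_left.1 h hw1 hw2
  by_cases h1 : G.s e ∈ X <;> by_cases h2 : G.s e ∈ Y <;>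
    by_cases h3 : G.t e ∈ X <;> by_cases h4 : G.t e ∈ Y <;>
    simp [h1, h2, h3, h4] <;>
    first
      | rfl
      | (exact absurd (hd _ h1 h2) (by simp))
      | (exact absurd (hd _ h3 h4) (by simp))

lemma exc_union_disjoint (A : Finset G.E) (b : G.V → ℤ) {X Y : Finset G.V}
    (h : Disjoint X Y) :
    exc G A b (X ∪ Y) = exc G A b X + exc G A b Y + 1 - eCross G A X Y := by
  unfold exc
  rw [Finset.sum_union h, mIn_union_disjoint G A h, Finset.card_union_of_disjoint h]
  push_cast
  ring

lemma mIn_submod (A : Finset G.E) (X Y : Finset G.V) :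
    mIn G A X + mIn G A Y ≤ mIn G A (X ∪ Y) + mIn G A (X ∩ Y) := by
  unfold mIn
  rw [← Finset.sum_add_distrib, ← Finset.sum_add_distrib]
  refine Finset.sum_le_sum (fun e _ => ?_)
  by_cases h1 : G.s e ∈ X <;> by_cases h2 : G.s e ∈ Y <;>
    by_cases h3 : G.t e ∈ X <;> by_cases h4 : G.t e ∈ Y <;>
    simp [h1, h2, h3, h4]

lemma exc_submod (A : Finset G.E) (b : G.V → ℤ) (X Y : Finset G.V) :
    exc G A b (X ∪ Y) + exc G A b (X ∩ Y) ≤ exc G A b X + exc G A b Y := by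
  unfold exc
  have hs : (∑ v ∈ X ∪ Y, b v) + (∑ v ∈ X ∩ Y, b v) = (∑ v ∈ X, b v) + (∑ v ∈ Y, b v) :=
    Finset.sum_union_inter
  have hc : ((X ∪ Y).card : ℤ) + ((X ∩ Y).card : ℤ) = (X.card : ℤ) + (Y.card : ℤ) := by
    have := Finset.card_union_add_card_inter X Y
    exact_mod_cast congrArg (Nat.cast : ℕ → ℤ) this
  have hm := mIn_submod G A X Y
  omega


lemma bilin_comm (X S : Finset G.V) : bilin G X S = bilin G S X := by
  unfold bilin
  exact Finset.sum_congr rfl (fun e _ => by ring)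

lemma bilin_nonneg_of_subset {X S : Finset G.V} (h : S ⊆ X) : 0 ≤ bilin G X S := by
  unfold bilin
  apply Finset.sum_nonneg
  intro e _
  unfold ind
  by_cases h1 : G.s e ∈ S <;> by_cases h2 : G.t e ∈ S <;>
    [ (have := h h1; have := h h2) ; (have := h h1) ; (have := h h2) ; skip ] <;>
    by_cases h3 : G.s e ∈ X <;> by_cases h4 : G.t e ∈ X <;>
    simp_all <;> norm_num

lemma eCross_A0_eq {X Y : Finset G.V} (h : Disjoint X Y) :
    eCross G (A0 G) X Y
      = ∑ e : G.E, if (G.s e ∈ X ∧ G.t e ∈ Y) ∨ (G.s e ∈ Y ∧ G.t e ∈ X) then (1:ℤ) else 0 := by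
  unfold eCross A0
  rw [Finset.sum_filter]
  refine Finset.sum_congr rfl (fun e _ => ?_)
  by_cases hl : G.s e ≠ G.t e
  · simp [hl]
  · push_neg at hl
    have hthis : ¬ ((G.s e ∈ X ∧ G.t e ∈ Y) ∨ (G.s e ∈ Y ∧ G.t e ∈ X)) := by
      rw [hl]
      rintro (⟨ha, hb⟩ | ⟨ha, hb⟩)
      · exact Finset.disjoint_left.1 h ha hb
      · exact Finset.disjoint_left.1 h hb ha
    simp only [hl, if_neg hthis, ne_eq, not_true_eq_false, if_false]
    rw [if_neg]
    rw [hl] at hthis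
    exact hthis

lemma bilin_of_disjoint {X S : Finset G.V} (h : Disjoint S X) :
    bilin G X S = - eCross G (A0 G) S X := by
  rw [eCross_A0_eq G h]
  unfold bilin ind
  rw [← Finset.sum_neg_distrib]
  refine Finset.sum_congr rfl (fun e _ => ?_)
  have hd : ∀ w : G.V, w ∈ S → w ∈ X → False := fun w hw1 hw2 =>
    Finset.disjoint_left.1 h hw1 hw2
  by_cases h1 : G.s e ∈ X <;> by_cases h2 : G.s e ∈ S <;>
    by_cases h3 : G.t e ∈ X <;> by_cases h4 : G.t e ∈ S <;>
    first
      | (exact absurd (hd _ h2 h1) (by simp))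
      | (exact absurd (hd _ h4 h3) (by simp))
      | (simp [h1, h2, h3, h4])

lemma bilin_of_subset_eq {X A : Finset G.V} (h : A ⊆ X) :
    bilin G X A = eCross G (A0 G) A (Finset.univ \ X) := by
  have hd : Disjoint A (Finset.univ \ X) := by
    rw [Finset.disjoint_right]
    intro w hw1 hw2
    exact (Finset.mem_sdiff.1 hw1).2 (h hw2)
  rw [eCross_A0_eq G hd]
  unfold bilin ind
  refine Finset.sum_congr rfl (fun e _ => ?_)
  have hsub : ∀ w : G.V, w ∈ A → w ∈ X := fun w hw => h hw
  by_cases h1 : G.s e ∈ X <;> by_cases h2 : G.s e ∈ A <;>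
    by_cases h3 : G.t e ∈ X <;> by_cases h4 : G.t e ∈ A <;>
    first
      | (exact absurd (hsub _ h2) h1)
      | (exact absurd (hsub _ h4) h3)
      | (simp [h1, h2, h3, h4])

lemma eCross_mono_right (A : Finset G.E) (X : Finset G.V) {Y Y' : Finset G.V} (h : Y ⊆ Y') :
    eCross G A X Y ≤ eCross G A X Y' := by
  unfold eCross
  refine Finset.sum_le_sum (fun e _ => ?_)
  by_cases hc : (G.s e ∈ X ∧ G.t e ∈ Y) ∨ (G.s e ∈ Y ∧ G.t e ∈ X)
  · have hc' : (G.s e ∈ X ∧ G.t e ∈ Y') ∨ (G.s e ∈ Y' ∧ G.t e ∈ X) := by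
      rcases hc with ⟨ha, hb⟩ | ⟨ha, hb⟩
      · exact Or.inl ⟨ha, h hb⟩
      · exact Or.inr ⟨h ha, hb⟩
    simp [hc, hc']
  · simp [hc]
    split_ifs <;> norm_num


lemma closed_of_no_crossing {S : Finset G.V}
    (hno : ∀ e : G.E, ¬ ((G.s e ∈ S ∧ G.t e ∉ S) ∨ (G.t e ∈ S ∧ G.s e ∉ S)))
    {x y : G.V} (hxy : Relation.ReflTransGen G.Adj x y) (hx : x ∈ S) : y ∈ S := by
  induction hxy with
  | refl => exact hx
  | tail _ hadj ih =>
      rcases hadj with ⟨e, ⟨hs, ht⟩ | ⟨hs, ht⟩⟩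
      · by_contra hy
        exact hno e (Or.inl ⟨hs ▸ ih, ht ▸ hy⟩)
      · by_contra hy
        exact hno e (Or.inr ⟨ht ▸ ih, hs ▸ hy⟩)

lemma exists_crossing (hconn : G.Connected) {S : Finset G.V}
    (hne : S.Nonempty) (hproper : S ≠ Finset.univ) :
    ∃ e : G.E, (G.s e ∈ S ∧ G.t e ∉ S) ∨ (G.t e ∈ S ∧ G.s e ∉ S) := by
  by_contra hno
  push_neg at hno
  obtain ⟨v, hv⟩ := hne
  obtain ⟨u, hu⟩ : ∃ u, u ∉ S := by
    by_contra hall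
    push_neg at hall
    exact hproper (Finset.eq_univ_iff_forall.2 hall)
  have hno' : ∀ e : G.E, ¬ ((G.s e ∈ S ∧ G.t e ∉ S) ∨ (G.t e ∈ S ∧ G.s e ∉ S)) := by
    intro e
    rintro (⟨h1, h2⟩ | ⟨h1, h2⟩)
    · exact h2 ((hno e).1 h1)
    · exact h2 ((hno e).2 h1)
  exact hu (closed_of_no_crossing G hno' (hconn.2 v u) hv)

lemma bilin_self_ge_one (hconn : G.Connected) {S : Finset G.V}
    (hne : S.Nonempty) (hproper : S ≠ Finset.univ) : 1 ≤ bilin G S S := by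
  obtain ⟨e₀, he₀⟩ := exists_crossing G hconn hne hproper
  unfold bilin
  have hterm : ∀ e : G.E,
      0 ≤ (ind G S (G.s e) - ind G S (G.t e)) * (ind G S (G.s e) - ind G S (G.t e)) :=
    fun e => mul_self_nonneg _
  have h1 : (ind G S (G.s e₀) - ind G S (G.t e₀)) * (ind G S (G.s e₀) - ind G S (G.t e₀)) = 1 := by
    unfold ind
    rcases he₀ with ⟨ha, hb⟩ | ⟨ha, hb⟩ <;> simp [ha, hb]
  calc (1:ℤ) = (ind G S (G.s e₀) - ind G S (G.t e₀)) * (ind G S (G.s e₀) - ind G S (G.t e₀)) :=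
        h1.symm
    _ ≤ _ := Finset.single_le_sum (fun e _ => hterm e) (Finset.mem_univ e₀)

lemma exc_shift (A : Finset G.E) (b : G.V → ℤ) (X S : Finset G.V) :
    exc G A (fun v => b v + G.lap (fun w => ind G X w) v) S = exc G A b S + bilin G X S := by
  unfold exc
  rw [Finset.sum_add_distrib, sum_lap_eq]
  unfold bilin
  ring


section Descent

variable {G}

/-- Case B of the descent: sets disjoint from the fired set have nonnegative new excess. -/
lemma descent_caseB (hconn : G.Connected) {b b' : G.V → ℤ} {X : Finset G.V} {mstar : ℤ}
    (hsh : ∀ S, exc G (A0 G) b' S = exc G (A0 G) b S + bilin G X S)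
    (hm1 : mstar ≤ -1)
    (hXne : X.Nonempty) (hXproper : X ≠ Finset.univ)
    (hXval : exc G (A0 G) b X = mstar)
    (hlow : ∀ S : Finset G.V, S.Nonempty → S ≠ Finset.univ → mstar ≤ exc G (A0 G) b S)
    (hmaxcard : ∀ S : Finset G.V, S.Nonempty → S ≠ Finset.univ →
      exc G (A0 G) b S = mstar → S.card ≤ X.card)
    (huniv : exc G (A0 G) b Finset.univ = 0)
    {S : Finset G.V} (hSne : S.Nonempty) (hSproper : S ≠ Finset.univ)
    (hdisj : Disjoint S X) : 0 ≤ exc G (A0 G) b' S := by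
  have hb : bilin G X S = - eCross G (A0 G) S X := bilin_of_disjoint G hdisj
  have hIdA : exc G (A0 G) b (S ∪ X) = exc G (A0 G) b S + exc G (A0 G) b X + 1
      - eCross G (A0 G) S X := exc_union_disjoint G (A0 G) b hdisj
  have hkey : exc G (A0 G) b' S = exc G (A0 G) b (S ∪ X) - mstar - 1 := by
    rw [hsh, hb, hXval] at *
    omega
  by_cases hU : S ∪ X = Finset.univ
  · rw [hkey, hU, huniv]; omega
  · have hUne : (S ∪ X).Nonempty := hSne.mono Finset.subset_union_left
    have h1 : mstar ≤ exc G (A0 G) b (S ∪ X) := hlow _ hUne hU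
    have h2 : exc G (A0 G) b (S ∪ X) ≠ mstar := by
      intro hEq
      have hc := hmaxcard _ hUne hU hEq
      rw [Finset.card_union_of_disjoint hdisj] at hc
      have : S.card = 0 := by omega
      exact absurd (Finset.card_eq_zero.1 this) (Finset.nonempty_iff_ne_empty.1 hSne)
    omega

/-- The key descent lemma. -/
lemma descent_key (hconn : G.Connected) {b b' : G.V → ℤ} {X : Finset G.V} {mstar : ℤ}
    (hsh : ∀ S, exc G (A0 G) b' S = exc G (A0 G) b S + bilin G X S)
    (hm1 : mstar ≤ -1)
    (hXne : X.Nonempty) (hXproper : X ≠ Finset.univ)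
    (hXval : exc G (A0 G) b X = mstar)
    (hlow : ∀ S : Finset G.V, S.Nonempty → S ≠ Finset.univ → mstar ≤ exc G (A0 G) b S)
    (hmaxcard : ∀ S : Finset G.V, S.Nonempty → S ≠ Finset.univ →
      exc G (A0 G) b S = mstar → S.card ≤ X.card)
    (huniv : exc G (A0 G) b Finset.univ = 0)
    {S : Finset G.V} (hSne : S.Nonempty) (hSproper : S ≠ Finset.univ) :
    mstar ≤ exc G (A0 G) b' S ∧
      (exc G (A0 G) b' S = mstar → S ⊆ X ∧ S.card < X.card) := by
  by_cases hsub : S ⊆ X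
  · -- Case A
    have hb : 0 ≤ bilin G X S := bilin_nonneg_of_subset G hsub
    have h1 : mstar ≤ exc G (A0 G) b' S := by
      rw [hsh]
      have := hlow S hSne hSproper
      omega
    refine ⟨h1, fun hEq => ?_⟩
    refine ⟨hsub, ?_⟩
    have hXS : S ≠ X := by
      intro hEq2
      subst hEq2
      have hcut : 1 ≤ bilin G S S := bilin_self_ge_one G hconn hSne hSproper
      rw [hsh] at hEq
      omega
    exact Finset.card_lt_card (Finset.ssubset_iff_subset_ne.2 ⟨hsub, hXS⟩)
  · by_cases hint : (S ∩ X).Nonempty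
    · -- Case C (mixed)
      set A1 := S ∩ X with hA1
      set W := S \ X with hW
      have hWne : W.Nonempty := by
        rw [hW, Finset.sdiff_nonempty]
        exact hsub
      have hSsplit : A1 ∪ W = S := by
        ext w
        simp only [hA1, hW, Finset.mem_union, Finset.mem_inter, Finset.mem_sdiff]
        tauto
      have hdAW : Disjoint A1 W := by
        rw [hA1, hW]
        rw [Finset.disjoint_right]
        intro w hw1 hw2
        exact (Finset.mem_sdiff.1 hw1).2 (Finset.mem_inter.1 hw2).2
      have hIdA' : exc G (A0 G) b' S = exc G (A0 G) b' A1 + exc G (A0 G) b' W + 1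
          - eCross G (A0 G) A1 W := by
        rw [← hSsplit]
        exact exc_union_disjoint G (A0 G) b' hdAW
      have hA1X : A1 ⊆ X := by rw [hA1]; exact Finset.inter_subset_right
      have hA1proper : A1 ≠ Finset.univ := by
        intro hEq
        exact hXproper (Finset.eq_univ_iff_forall.2 (fun x => hA1X (hEq ▸ Finset.mem_univ x)))
      have hbA1 : bilin G X A1 = eCross G (A0 G) A1 (Finset.univ \ X) :=
        bilin_of_subset_eq G hA1X
      have hWsub : W ⊆ Finset.univ \ X := by
        intro w hw
        rw [Finset.mem_sdiff]
        exact ⟨Finset.mem_univ w, (Finset.mem_sdiff.1 hw).2⟩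
      have hmono : eCross G (A0 G) A1 W ≤ eCross G (A0 G) A1 (Finset.univ \ X) :=
        eCross_mono_right G (A0 G) A1 hWsub
      have hexcA1 : mstar + eCross G (A0 G) A1 W ≤ exc G (A0 G) b' A1 := by
        rw [hsh, hbA1]
        have := hlow A1 hint hA1proper
        omega
      have hWdisj : Disjoint W X := by
        rw [hW, Finset.disjoint_left]
        intro w hw
        exact (Finset.mem_sdiff.1 hw).2
      have hWproper : W ≠ Finset.univ := by
        intro hEq
        obtain ⟨x, hx⟩ := hXne
        have : x ∈ W := hEq ▸ Finset.mem_univ x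
        exact (Finset.mem_sdiff.1 this).2 hx
      have hexcW : 0 ≤ exc G (A0 G) b' W :=
        descent_caseB hconn hsh hm1 hXne hXproper hXval hlow hmaxcard huniv hWne hWproper hWdisj
      constructor
      · rw [hIdA']; omega
      · intro hEq
        rw [hIdA'] at hEq
        omega
    · -- Case B (disjoint)
      rw [Finset.not_nonempty_iff_eq_empty] at hint
      have hdisj : Disjoint S X := Finset.disjoint_iff_inter_eq_empty.2 hint
      have h0 : 0 ≤ exc G (A0 G) b' S :=
        descent_caseB hconn hsh hm1 hXne hXproper hXval hlow hmaxcard huniv hSne hSproper hdisj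
      exact ⟨by omega, fun hEq => by omega⟩

end Descent


/-- The chip configuration associated to `D` and a firing function `f`. -/
noncomputable def bOf (D : G.V → ℤ) (f : G.V → ℤ) : G.V → ℤ :=
  fun v => D v - G.lap f v - nloops G v

/-- Loops as a finset. -/
noncomputable def Loops : Finset G.E := Finset.univ.filter (fun e => G.s e = G.t e)

lemma sum_nloops : ∑ v, nloops G v = ((Loops G).card : ℤ) := by
  unfold nloops Loops
  have h1 : ∀ v : G.V, ((Finset.univ.filter (fun e : G.E => G.s e = G.t e ∧ G.s e = v)).card : ℤ)
      = ∑ e : G.E, if G.s e = G.t e ∧ G.s e = v then (1:ℤ) else 0 := by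
    intro v
    rw [Finset.card_filter]
    push_cast
    rfl
  rw [Finset.sum_congr rfl (fun v _ => h1 v), Finset.sum_comm, Finset.card_filter]
  push_cast
  refine Finset.sum_congr rfl (fun e _ => ?_)
  by_cases hl : G.s e = G.t e
  · have h2 : ∀ v : G.V, (if G.s e = G.t e ∧ G.s e = v then (1:ℤ) else 0)
        = if G.s e = v then (1:ℤ) else 0 := fun v => by simp [hl]
    rw [Finset.sum_congr rfl (fun v _ => h2 v),
      Finset.sum_ite_eq Finset.univ (G.s e) (fun _ => (1:ℤ))]
    simp [hl]
  · have h2 : ∀ v : G.V, (if G.s e = G.t e ∧ G.s e = v then (1:ℤ) else 0) = 0 :=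
      fun v => by simp [hl]
    rw [Finset.sum_congr rfl (fun v _ => h2 v)]
    simp [hl]

lemma mIn_A0_univ : mIn G (A0 G) Finset.univ = ((A0 G).card : ℤ) := by
  unfold mIn
  have h1 : ∀ e ∈ A0 G,
      (if G.s e ∈ (Finset.univ : Finset G.V) ∧ G.t e ∈ (Finset.univ : Finset G.V)
        then (1:ℤ) else 0) = 1 := fun e _ => by simp
  rw [Finset.sum_congr rfl h1]
  simp

lemma card_A0_add_loops :
    ((A0 G).card : ℤ) + ((Loops G).card : ℤ) = (Fintype.card G.E : ℤ) := by
  have h := Finset.card_filter_add_card_filter_not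
    (s := (Finset.univ : Finset G.E)) (p := fun e => G.s e ≠ G.t e)
  have h2 : (Finset.univ.filter (fun e : G.E => ¬ G.s e ≠ G.t e))
      = Finset.univ.filter (fun e : G.E => G.s e = G.t e) := by
    ext e
    simp [not_not]
  rw [h2, Finset.card_univ] at h
  unfold A0 Loops
  exact_mod_cast congrArg (Nat.cast : ℕ → ℤ) h

section Step1

variable {G}
variable (hconn : G.Connected) (D : G.V → ℤ)
variable (hD : ∑ v, D v = (Fintype.card G.E : ℤ) - (Fintype.card G.V : ℤ) + 1)

lemma sum_bOf (hD : ∑ v, D v = (Fintype.card G.E : ℤ) - (Fintype.card G.V : ℤ) + 1)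
    (f : G.V → ℤ) :
    ∑ v, bOf G D f v = ((A0 G).card : ℤ) - ((Fintype.card G.V : ℤ) - 1) := by
  unfold bOf
  rw [Finset.sum_sub_distrib, Finset.sum_sub_distrib, sum_lap_univ, sum_nloops, hD]
  have := card_A0_add_loops G
  omega

lemma exc_bOf_univ (hD : ∑ v, D v = (Fintype.card G.E : ℤ) - (Fintype.card G.V : ℤ) + 1) (f : G.V → ℤ) : exc G (A0 G) (bOf G D f) Finset.univ = 0 := by
  unfold exc
  rw [sum_bOf D hD f, mIn_A0_univ]
  simp [Finset.card_univ]

/-- The collection of proper nonempty vertex sets. -/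
noncomputable def SS : Finset (Finset G.V) :=
  Finset.univ.filter (fun S => S.Nonempty ∧ S ≠ Finset.univ)

lemma get_min_data (b : G.V → ℤ)
    (hex : ∃ S : Finset G.V, S.Nonempty ∧ S ≠ Finset.univ ∧ exc G (A0 G) b S < 0) :
    ∃ (mstar : ℤ) (X : Finset G.V), mstar ≤ -1 ∧ X.Nonempty ∧ X ≠ Finset.univ ∧
      exc G (A0 G) b X = mstar ∧
      (∀ S : Finset G.V, S.Nonempty → S ≠ Finset.univ → mstar ≤ exc G (A0 G) b S) ∧
      (∀ S : Finset G.V, S.Nonempty → S ≠ Finset.univ →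
        exc G (A0 G) b S = mstar → S.card ≤ X.card) := by
  obtain ⟨S0, hS0ne, hS0proper, hS0neg⟩ := hex
  have hS0mem : S0 ∈ SS (G := G) := by
    unfold SS; simp [hS0ne, hS0proper]
  have hSSne : (SS (G := G)).Nonempty := ⟨S0, hS0mem⟩
  have himgne : ((SS (G := G)).image (exc G (A0 G) b)).Nonempty := hSSne.image _
  set mstar := ((SS (G := G)).image (exc G (A0 G) b)).min' himgne with hmstar
  have hlow : ∀ S : Finset G.V, S.Nonempty → S ≠ Finset.univ → mstar ≤ exc G (A0 G) b S := by
    intro S hne hproper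
    apply Finset.min'_le
    exact Finset.mem_image_of_mem _ (by unfold SS; simp [hne, hproper])
  have hm1 : mstar ≤ -1 := le_trans (hlow S0 hS0ne hS0proper) (by omega)
  have hmem : mstar ∈ (SS (G := G)).image (exc G (A0 G) b) := Finset.min'_mem _ _
  obtain ⟨S1, hS1mem, hS1val⟩ := Finset.mem_image.1 hmem
  set argmins := (SS (G := G)).filter (fun S => exc G (A0 G) b S = mstar) with hargs
  have hargne : argmins.Nonempty := ⟨S1, by rw [hargs]; exact Finset.mem_filter.2 ⟨hS1mem, hS1val⟩⟩
  obtain ⟨X, hXmem, hXmax⟩ := Finset.exists_max_image argmins (fun S => S.card) hargne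
  rw [hargs, Finset.mem_filter] at hXmem
  obtain ⟨hXSS, hXval⟩ := hXmem
  unfold SS at hXSS
  rw [Finset.mem_filter] at hXSS
  refine ⟨mstar, X, hm1, hXSS.2.1, hXSS.2.2, hXval, hlow, ?_⟩
  intro S hne hproper hval
  exact hXmax S (by rw [hargs]; exact Finset.mem_filter.2 ⟨by unfold SS; simp [hne, hproper], hval⟩)

lemma step1_aux (hconn : G.Connected) (hD : ∑ v, D v = (Fintype.card G.E : ℤ) - (Fintype.card G.V : ℤ) + 1) : ∀ (N : ℕ) (f : G.V → ℤ) (mstar : ℤ) (X : Finset G.V),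
    mstar ≤ -1 → X.Nonempty → X ≠ Finset.univ →
    exc G (A0 G) (bOf G D f) X = mstar →
    (∀ S : Finset G.V, S.Nonempty → S ≠ Finset.univ → mstar ≤ exc G (A0 G) (bOf G D f) S) →
    (∀ S : Finset G.V, S.Nonempty → S ≠ Finset.univ →
        exc G (A0 G) (bOf G D f) S = mstar → S.card ≤ X.card) →
    ((- mstar).toNat * (Fintype.card G.V + 1) + X.card ≤ N) →
    ∃ f' : G.V → ℤ, ∀ S : Finset G.V, S.Nonempty → S ≠ Finset.univ →
      0 ≤ exc G (A0 G) (bOf G D f') S := by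
  intro N
  induction N using Nat.strong_induction_on with
  | _ N IH =>
    intro f mstar X hm1 hXne hXproper hXval hlow hmaxcard hmeas
    set f' : G.V → ℤ := fun v => f v - ind G X v with hf'
    have hbOf' : bOf G D f' = fun v => bOf G D f v + G.lap (fun w => ind G X w) v := by
      funext v
      unfold bOf
      rw [hf', lap_sub]
      ring
    have hsh : ∀ S, exc G (A0 G) (bOf G D f') S = exc G (A0 G) (bOf G D f) S + bilin G X S := by
      intro S
      rw [hbOf']
      exact exc_shift G (A0 G) (bOf G D f) X S
    have hkey := fun (S : Finset G.V) (hne : S.Nonempty) (hproper : S ≠ Finset.univ) =>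
      descent_key hconn hsh hm1 hXne hXproper hXval hlow hmaxcard
        (exc_bOf_univ D hD f) hne hproper
    by_cases hgood : ∀ S : Finset G.V, S.Nonempty → S ≠ Finset.univ →
        0 ≤ exc G (A0 G) (bOf G D f') S
    · exact ⟨f', hgood⟩
    · push_neg at hgood
      obtain ⟨S2, hS2ne, hS2proper, hS2neg⟩ := hgood
      obtain ⟨mstar', X', hm1', hX'ne, hX'proper, hX'val, hlow', hmaxcard'⟩ :=
        get_min_data (bOf G D f') ⟨S2, hS2ne, hS2proper, by omega⟩
      have hge : mstar ≤ mstar' := by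
        rw [← hX'val]
        exact (hkey X' hX'ne hX'proper).1
      have hdec : (- mstar').toNat * (Fintype.card G.V + 1) + X'.card <
          (- mstar).toNat * (Fintype.card G.V + 1) + X.card := by
        rcases lt_or_eq_of_le hge with hlt | heq
        · have h2 : X'.card ≤ Fintype.card G.V := by
            rw [← Finset.card_univ]
            exact Finset.card_le_card (Finset.subset_univ X')
          calc (- mstar').toNat * (Fintype.card G.V + 1) + X'.card
              ≤ (- mstar').toNat * (Fintype.card G.V + 1) + Fintype.card G.V :=
                Nat.add_le_add_left h2 _
            _ < (- mstar').toNat * (Fintype.card G.V + 1) + (Fintype.card G.V + 1) :=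
                Nat.add_lt_add_left (Nat.lt_succ_self _) _
            _ = ((- mstar').toNat + 1) * (Fintype.card G.V + 1) := by ring
            _ ≤ (- mstar).toNat * (Fintype.card G.V + 1) :=
                Nat.mul_le_mul_right _ (by omega)
            _ ≤ (- mstar).toNat * (Fintype.card G.V + 1) + X.card := Nat.le_add_right _ _
        · have hcard : X'.card < X.card := by
            have := (hkey X' hX'ne hX'proper).2 (by rw [hX'val, heq])
            exact this.2
          have heq2 : (- mstar').toNat = (- mstar).toNat := by omega
          rw [heq2]
          exact Nat.add_lt_add_left hcard _
      exact IH _ (by omega) f' mstar' X' hm1' hX'ne hX'proper hX'val hlow' hmaxcard'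
        (le_refl _)

lemma step1 (hconn : G.Connected) (hD : ∑ v, D v = (Fintype.card G.E : ℤ) - (Fintype.card G.V : ℤ) + 1) : ∃ f' : G.V → ℤ, ∀ S : Finset G.V, S.Nonempty →
    0 ≤ exc G (A0 G) (bOf G D f') S := by
  have main : ∃ f' : G.V → ℤ, ∀ S : Finset G.V, S.Nonempty → S ≠ Finset.univ →
      0 ≤ exc G (A0 G) (bOf G D f') S := by
    by_cases hgood : ∀ S : Finset G.V, S.Nonempty → S ≠ Finset.univ →
        0 ≤ exc G (A0 G) (bOf G D (fun _ => 0)) S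
    · exact ⟨_, hgood⟩
    · push_neg at hgood
      obtain ⟨S2, hS2ne, hS2proper, hS2neg⟩ := hgood
      obtain ⟨mstar, X, hm1, hXne, hXproper, hXval, hlow, hmaxcard⟩ :=
        get_min_data (bOf G D (fun _ => 0)) ⟨S2, hS2ne, hS2proper, by omega⟩
      exact step1_aux D hconn hD _ (fun _ => 0) mstar X hm1 hXne hXproper hXval hlow hmaxcard
        (le_refl _)
  obtain ⟨f', hf'⟩ := main
  refine ⟨f', fun S hne => ?_⟩
  by_cases hproper : S = Finset.univ
  · rw [hproper, exc_bOf_univ D hD f']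
  · exact hf' S hne hproper

end Step1


section Hall

variable {G}

lemma mIn_singleton_zero {A : Finset G.E} (hloopless : ∀ e ∈ A, G.s e ≠ G.t e) (v : G.V) :
    mIn G A {v} = 0 := by
  unfold mIn
  apply Finset.sum_eq_zero
  intro e he
  have : ¬ (G.s e ∈ ({v} : Finset G.V) ∧ G.t e ∈ ({v} : Finset G.V)) := by
    rintro ⟨h1, h2⟩
    rw [Finset.mem_singleton] at h1 h2
    exact hloopless e he (h1.trans h2.symm)
  simp only [Finset.mem_singleton] at this ⊢
  rw [if_neg this]

lemma b_nonneg {A : Finset G.E} {b : G.V → ℤ} (hloopless : ∀ e ∈ A, G.s e ≠ G.t e)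
    (H1 : ∀ S : Finset G.V, S.Nonempty → 0 ≤ exc G A b S) (v : G.V) : 0 ≤ b v := by
  have := H1 {v} (Finset.singleton_nonempty v)
  unfold exc at this
  rw [mIn_singleton_zero hloopless] at this
  simp at this
  omega

lemma tight_inter_pair {A : Finset G.E} {b : G.V → ℤ}
    (H1 : ∀ S : Finset G.V, S.Nonempty → 0 ≤ exc G A b S) {v : G.V} {S1 S2 : Finset G.V}
    (h1 : exc G A b S1 = 0) (h2 : exc G A b S2 = 0) (hv1 : v ∈ S1) (hv2 : v ∈ S2) :
    exc G A b (S1 ∩ S2) = 0 := by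
  have hsub := exc_submod G A b S1 S2
  have hu : 0 ≤ exc G A b (S1 ∪ S2) := H1 _ ⟨v, Finset.mem_union_left _ hv1⟩
  have hi : 0 ≤ exc G A b (S1 ∩ S2) := H1 _ ⟨v, Finset.mem_inter.2 ⟨hv1, hv2⟩⟩
  omega

/-- The other endpoint of an edge incident to `v`. -/
noncomputable def other (v : G.V) (e : G.E) : G.V := if G.s e = v then G.t e else G.s e

lemma tight_inter_fold {A : Finset G.E} {b : G.V → ℤ}
    (H1 : ∀ S : Finset G.V, S.Nonempty → 0 ≤ exc G A b S) (v : G.V) (F : Finset G.E)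
    (hF : F.Nonempty)
    (sel : ∀ e ∈ F, ∃ S : Finset G.V, S.Nonempty ∧ exc G A b S = 0 ∧ v ∈ S ∧ other v e ∉ S) :
    ∃ S : Finset G.V, S.Nonempty ∧ exc G A b S = 0 ∧ v ∈ S ∧ ∀ e ∈ F, other v e ∉ S := by
  induction F using Finset.induction_on with
  | empty => exact absurd hF (by simp)
  | insert _ _ hnotmem ih =>
    rename_i a F'
    obtain ⟨Sa, hSane, hSa0, hSav, hSaother⟩ := sel a (Finset.mem_insert_self a F')
    by_cases hF' : F'.Nonempty
    · obtain ⟨S', hS'ne, hS'0, hS'v, hS'other⟩ := ih hF' (fun e he => sel e (Finset.mem_insert_of_mem he))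
      refine ⟨Sa ∩ S', ⟨v, Finset.mem_inter.2 ⟨hSav, hS'v⟩⟩,
        tight_inter_pair H1 hSa0 hS'0 hSav hS'v, Finset.mem_inter.2 ⟨hSav, hS'v⟩, ?_⟩
      intro e he
      rcases Finset.mem_insert.1 he with rfl | he'
      · intro hmem
        exact hSaother (Finset.mem_inter.1 hmem).1
      · intro hmem
        exact hS'other e he' (Finset.mem_inter.1 hmem).2
    · rw [Finset.not_nonempty_iff_eq_empty] at hF'
      subst hF'
      refine ⟨Sa, hSane, hSa0, hSav, ?_⟩
      intro e he
      rcases Finset.mem_insert.1 he with rfl | he'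
      · exact hSaother
      · exact absurd he' (by simp)

end Hall


section HallMain

variable {G}

lemma base_conn [Nonempty G.V] {A : Finset G.E}
    (hloopless : ∀ e ∈ A, G.s e ≠ G.t e)
    (hmle : ∀ S : Finset G.V, S.Nonempty → S ≠ Finset.univ →
      mIn G A S ≤ (S.card : ℤ) - 1)
    (hcard : (A.card : ℤ) = (Fintype.card G.V : ℤ) - 1) :
    ∀ v u : G.V, Relation.ReflTransGen (G.AdjIn A) v u := by
  intro v u
  set C := Finset.univ.filter (fun u => Relation.ReflTransGen (G.AdjIn A) v u) with hC
  have hvC : v ∈ C := by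
    rw [hC, Finset.mem_filter]
    exact ⟨Finset.mem_univ v, Relation.ReflTransGen.refl⟩
  have hCuniv : C = Finset.univ := by
    by_contra hproper
    have hclosed : ∀ e ∈ A, (G.s e ∈ C ↔ G.t e ∈ C) := by
      intro e he
      constructor
      · intro hs
        rw [hC, Finset.mem_filter] at hs ⊢
        exact ⟨Finset.mem_univ _, hs.2.tail ⟨e, he, Or.inl ⟨rfl, rfl⟩⟩⟩
      · intro ht
        rw [hC, Finset.mem_filter] at ht ⊢
        exact ⟨Finset.mem_univ _, ht.2.tail ⟨e, he, Or.inr ⟨rfl, rfl⟩⟩⟩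
    have hsplit : mIn G A C + mIn G A (Finset.univ \ C) = (A.card : ℤ) := by
      unfold mIn
      rw [← Finset.sum_add_distrib]
      rw [Finset.card_eq_sum_ones A]
      push_cast
      refine Finset.sum_congr rfl (fun e he => ?_)
      by_cases hs : G.s e ∈ C
      · have ht : G.t e ∈ C := (hclosed e he).1 hs
        simp [hs, ht]
      · have ht : G.t e ∉ C := fun h => hs ((hclosed e he).2 h)
        simp [hs, ht]
    have hCccne : (Finset.univ \ C).Nonempty := by
      rw [Finset.sdiff_nonempty]
      intro hsub
      exact hproper (Finset.eq_univ_iff_forall.2 (fun x => hsub (Finset.mem_univ x)))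
    have h1 := hmle C ⟨v, hvC⟩ hproper
    have hCcproper : Finset.univ \ C ≠ Finset.univ := by
      intro hEq
      have hv2 : v ∈ Finset.univ \ C := by rw [hEq]; exact Finset.mem_univ v
      exact (Finset.mem_sdiff.1 hv2).2 hvC
    have h2 := hmle (Finset.univ \ C) hCccne hCcproper
    have hcards : (C.card : ℤ) + ((Finset.univ \ C).card : ℤ) = (Fintype.card G.V : ℤ) := by
      have := Finset.card_sdiff_add_card_eq_card (Finset.subset_univ C)
      rw [Finset.card_univ] at this
      omega
    omega
  have : u ∈ C := hCuniv ▸ Finset.mem_univ u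
  rw [hC, Finset.mem_filter] at this
  exact this.2

lemma hall_main [Nonempty G.V] : ∀ (N : ℕ) (A : Finset G.E) (b : G.V → ℤ),
    A.card = N →
    (∀ e ∈ A, G.s e ≠ G.t e) →
    (∀ S : Finset G.V, S.Nonempty → 0 ≤ exc G A b S) →
    ((∑ v, b v) = (A.card : ℤ) - ((Fintype.card G.V : ℤ) - 1)) →
    ∃ T : Finset G.E, T ⊆ A ∧ (∀ v u : G.V, Relation.ReflTransGen (G.AdjIn T) v u) ∧
      (T.card + 1 = Fintype.card G.V) ∧
      ∃ ψ : G.E → G.V, (∀ e ∈ A \ T, ψ e = G.s e ∨ ψ e = G.t e) ∧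
        (∀ v : G.V, (∑ e ∈ A \ T, if ψ e = v then (1:ℤ) else 0) = b v) := by
  intro N
  induction N using Nat.strong_induction_on with
  | _ N IH =>
    intro A b hN hloopless H1 H2
    have hbnn : ∀ w, 0 ≤ b w := b_nonneg hloopless H1
    have hn1 : 1 ≤ Fintype.card G.V := Fintype.card_pos
    by_cases hzero : ∀ w, b w = 0
    · -- base case
      have hsumb : ∑ w, b w = 0 := Finset.sum_eq_zero (fun w _ => hzero w)
      have hcard : (A.card : ℤ) = (Fintype.card G.V : ℤ) - 1 := by omega
      have hmle : ∀ S : Finset G.V, S.Nonempty → S ≠ Finset.univ →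
          mIn G A S ≤ (S.card : ℤ) - 1 := by
        intro S hne hproper
        have := H1 S hne
        unfold exc at this
        have hs0 : ∑ w ∈ S, b w = 0 := Finset.sum_eq_zero (fun w _ => hzero w)
        omega
      refine ⟨A, Finset.Subset.refl A, base_conn hloopless hmle hcard, by omega, G.s, ?_, ?_⟩
      · intro e he
        rw [Finset.sdiff_self] at he
        exact absurd he (by simp)
      · intro w
        rw [Finset.sdiff_self]
        rw [hzero w]
        simp
    · -- inductive step
      push_neg at hzero
      obtain ⟨v, hv⟩ := hzero
      have hbv : 1 ≤ b v := by have := hbnn v; omega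
      set Ev := A.filter (fun e => G.s e = v ∨ G.t e = v) with hEv
      have hAne : A.Nonempty := by
        by_contra hA
        rw [Finset.not_nonempty_iff_eq_empty] at hA
        subst hA
        have hle : b v ≤ ∑ w, b w := Finset.single_le_sum (fun w _ => hbnn w) (Finset.mem_univ v)
        simp at H2
        omega
      have hEvne : Ev.Nonempty := by
        by_contra hEvne
        rw [Finset.not_nonempty_iff_eq_empty, hEv, Finset.filter_eq_empty_iff] at hEvne
        -- no edge incident to v
        obtain ⟨e₀, he₀⟩ := hAne
        have hw : ∃ w : G.V, w ≠ v := by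
          by_cases hs : G.s e₀ = v
          · exact ⟨G.t e₀, fun h => hloopless e₀ he₀ (hs.trans h.symm)⟩
          · exact ⟨G.s e₀, hs⟩
        obtain ⟨w, hwv⟩ := hw
        set S := Finset.univ \ ({v} : Finset G.V) with hS
        have hSne : S.Nonempty := ⟨w, by rw [hS, Finset.mem_sdiff]; simp [hwv]⟩
        have hmInS : mIn G A S = (A.card : ℤ) := by
          unfold mIn
          rw [Finset.card_eq_sum_ones A]
          push_cast
          refine Finset.sum_congr rfl (fun e he => ?_)
          have h1 := hEvne he
          push_neg at h1
          have hs : G.s e ∈ S := by rw [hS, Finset.mem_sdiff]; simp [h1.1]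
          have ht : G.t e ∈ S := by rw [hS, Finset.mem_sdiff]; simp [h1.2]
          simp [hs, ht]
        have hsumS : ∑ w ∈ S, b w = (∑ w, b w) - b v := by
          rw [hS]
          rw [Finset.sum_sdiff_eq_sub (Finset.subset_univ _)]
          simp
        have hcardS : (S.card : ℤ) = (Fintype.card G.V : ℤ) - 1 := by
          rw [hS, Finset.card_sdiff_of_subset (Finset.subset_univ _), Finset.card_univ,
            Finset.card_singleton]
          omega
        have := H1 S hSne
        unfold exc at this
        omega
      -- find a good edge
      have hsel : ∃ e ∈ Ev, ∀ S : Finset G.V, S.Nonempty → exc G A b S = 0 → v ∈ S →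
          other v e ∈ S := by
        by_contra hbad
        push_neg at hbad
        have hsel' : ∀ e ∈ Ev, ∃ S : Finset G.V, S.Nonempty ∧ exc G A b S = 0 ∧ v ∈ S ∧
            other v e ∉ S := by
          intro e he
          obtain ⟨S, h1, h2, h3, h4⟩ := hbad e he
          exact ⟨S, h1, h2, h3, h4⟩
        obtain ⟨Sstar, hSne, hS0, hSv, hSother⟩ := tight_inter_fold H1 v Ev hEvne hsel'
        -- no A-edge incident to v lies inside Sstar; so removing v kills excess
        have hnoedge : ∀ e ∈ A, ¬ (G.s e ∈ Sstar ∧ G.t e ∈ Sstar ∧ (G.s e = v ∨ G.t e = v)) := by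
          rintro e he ⟨hs, ht, hor⟩
          have heEv : e ∈ Ev := by rw [hEv, Finset.mem_filter]; exact ⟨he, hor⟩
          have hother := hSother e heEv
          unfold other at hother
          rcases hor with h | h
          · rw [if_pos h] at hother; exact hother ht
          · by_cases hsv : G.s e = v
            · rw [if_pos hsv] at hother; exact hother ht
            · rw [if_neg hsv] at hother; exact hother hs
        have hmm : mIn G A (Sstar \ {v}) = mIn G A Sstar := by
          unfold mIn
          refine Finset.sum_congr rfl (fun e he => ?_)
          by_cases hs : G.s e ∈ Sstar <;> by_cases ht : G.t e ∈ Sstar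
          · have hnv : ¬ (G.s e = v ∨ G.t e = v) := fun hor => hnoedge e he ⟨hs, ht, hor⟩
            push_neg at hnv
            have hs' : G.s e ∈ Sstar \ {v} := Finset.mem_sdiff.2 ⟨hs, by simp [hnv.1]⟩
            have ht' : G.t e ∈ Sstar \ {v} := Finset.mem_sdiff.2 ⟨ht, by simp [hnv.2]⟩
            simp [hs, ht, hs', ht']
          · have ht' : G.t e ∉ Sstar \ {v} := fun h => ht (Finset.mem_sdiff.1 h).1
            simp [ht, ht']
          · have hs' : G.s e ∉ Sstar \ {v} := fun h => hs (Finset.mem_sdiff.1 h).1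
            simp [hs, hs']
          · have hs' : G.s e ∉ Sstar \ {v} := fun h => hs (Finset.mem_sdiff.1 h).1
            simp [hs, hs']
        by_cases hSv1 : Sstar = {v}
        · -- then exc Sstar = b v ≥ 1 ≠ 0
          rw [hSv1] at hS0
          unfold exc at hS0
          rw [mIn_singleton_zero hloopless] at hS0
          simp at hS0
          omega
        · have hSmvne : (Sstar \ {v}).Nonempty := by
            rw [Finset.sdiff_nonempty]
            intro hsub
            apply hSv1
            apply Finset.Subset.antisymm hsub
            intro x hx
            rw [Finset.mem_singleton] at hx
            subst hx
            exact hSv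
          have hsum : ∑ w ∈ Sstar \ {v}, b w = (∑ w ∈ Sstar, b w) - b v := by
            rw [Finset.sum_sdiff_eq_sub (Finset.singleton_subset_iff.2 hSv)]
            simp
          have hcardm : ((Sstar \ {v}).card : ℤ) = (Sstar.card : ℤ) - 1 := by
            rw [Finset.card_sdiff_of_subset (Finset.singleton_subset_iff.2 hSv), Finset.card_singleton]
            have h1 : 1 ≤ Sstar.card := Finset.card_pos.2 ⟨v, hSv⟩
            omega
          have := H1 (Sstar \ {v}) hSmvne
          unfold exc at this hS0
          omega
      obtain ⟨e, heEv, hgood⟩ := hsel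
      rw [hEv, Finset.mem_filter] at heEv
      obtain ⟨heA, hor⟩ := heEv
      set u := other v e with hu
      have huv : u ≠ v := by
        rw [hu]
        unfold other
        by_cases hs : G.s e = v
        · rw [if_pos hs]
          intro h
          exact hloopless e heA (hs.trans h.symm)
        · rw [if_neg hs]
          exact hs
      have hend : (G.s e = v ∧ G.t e = u) ∨ (G.t e = v ∧ G.s e = u) := by
        rw [hu]
        unfold other
        by_cases hs : G.s e = v
        · exact Or.inl ⟨hs, by rw [if_pos hs]⟩
        · rcases hor with h | h
          · exact absurd h hs
          · exact Or.inr ⟨h, by rw [if_neg hs]⟩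
      set A' := A.erase e with hA'
      set b' : G.V → ℤ := fun w => if w = v then b w - 1 else b w with hb'
      have hA'sub : A' ⊆ A := Finset.erase_subset e A
      have hA'card : A'.card = A.card - 1 := Finset.card_erase_of_mem heA
      have hAcpos : 1 ≤ A.card := Finset.card_pos.2 hAne
      have hloopless' : ∀ e' ∈ A', G.s e' ≠ G.t e' := fun e' he' => hloopless e' (hA'sub he')
      have hmIn' : ∀ S : Finset G.V, mIn G A' S
          = mIn G A S - (if G.s e ∈ S ∧ G.t e ∈ S then 1 else 0) := by
        intro S
        unfold mIn
        rw [hA']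
        exact Finset.sum_erase_eq_sub heA
      have hsum' : ∀ S : Finset G.V, ∑ w ∈ S, b' w
          = (∑ w ∈ S, b w) - (if v ∈ S then 1 else 0) := by
        intro S
        rw [hb']
        have hpt : ∀ w ∈ S, (if w = v then b w - 1 else b w)
            = b w - (if w = v then 1 else 0) := by
          intro w _
          by_cases h : w = v <;> simp [h]
        rw [Finset.sum_congr rfl hpt, Finset.sum_sub_distrib]
        congr 1
        rw [Finset.sum_ite_eq' S v (fun _ => (1:ℤ))]
      have hinS : ∀ S : Finset G.V, v ∈ S → u ∈ S →
          (if G.s e ∈ S ∧ G.t e ∈ S then (1:ℤ) else 0) = 1 := by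
        intro S hvS huS
        rcases hend with ⟨h1, h2⟩ | ⟨h1, h2⟩
        · exact if_pos ⟨by rw [h1]; exact hvS, by rw [h2]; exact huS⟩
        · exact if_pos ⟨by rw [h2]; exact huS, by rw [h1]; exact hvS⟩
      have H1' : ∀ S : Finset G.V, S.Nonempty → 0 ≤ exc G A' b' S := by
        intro S hSne
        have hex : exc G A' b' S = exc G A b S - (if v ∈ S then 1 else 0)
            + (if G.s e ∈ S ∧ G.t e ∈ S then 1 else 0) := by
          unfold exc
          rw [hmIn' S, hsum' S]
          ring
        by_cases hvS : v ∈ S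
        · by_cases huS : u ∈ S
          · rw [hex, hinS S hvS huS, if_pos hvS]
            have := H1 S hSne
            omega
          · have hnotin : ¬ (G.s e ∈ S ∧ G.t e ∈ S) := by
              rintro ⟨h1, h2⟩
              rcases hend with ⟨ha, hb⟩ | ⟨ha, hb⟩
              · exact huS (hb ▸ h2)
              · exact huS (hb ▸ h1)
            have hexcpos : exc G A b S ≠ 0 := fun h0 => huS (hgood S hSne h0 hvS)
            have := H1 S hSne
            rw [hex, if_neg hnotin, if_pos hvS]
            omega
        · have hnotin : ¬ (G.s e ∈ S ∧ G.t e ∈ S) := by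
            rintro ⟨h1, h2⟩
            rcases hend with ⟨ha, hb⟩ | ⟨ha, hb⟩
            · exact hvS (ha ▸ h1)
            · exact hvS (ha ▸ h2)
          have := H1 S hSne
          rw [hex, if_neg hnotin, if_neg hvS]
          omega
      have H2' : (∑ w, b' w) = ((A'.card : ℕ) : ℤ) - ((Fintype.card G.V : ℤ) - 1) := by
        rw [hsum' Finset.univ, if_pos (Finset.mem_univ v), hA'card, H2]
        omega
      obtain ⟨T, hTA', hTconn, hTcard, ψ', hmem', hcount'⟩ :=
        IH (A.card - 1) (by omega) A' b' (by omega) hloopless' H1' H2'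
      set ψ : G.E → G.V := fun e' => if e' = e then v else ψ' e' with hψ
      have heT : e ∉ T := fun h => (Finset.notMem_erase e A) (hTA' h)
      have heAT : e ∈ A \ T := Finset.mem_sdiff.2 ⟨heA, heT⟩
      have hsplit : A \ T = insert e (A' \ T) := by
        ext x
        rw [Finset.mem_insert, Finset.mem_sdiff, Finset.mem_sdiff, hA']
        constructor
        · rintro ⟨hxA, hxT⟩
          by_cases hxe : x = e
          · exact Or.inl hxe
          · exact Or.inr ⟨Finset.mem_erase.2 ⟨hxe, hxA⟩, hxT⟩
        · rintro (rfl | ⟨hxA', hxT⟩)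
          · exact ⟨heA, heT⟩
          · exact ⟨(Finset.erase_subset e A) hxA', hxT⟩
      have henotin : e ∉ A' \ T := fun h => (Finset.notMem_erase e A) (Finset.mem_sdiff.1 h).1
      refine ⟨T, le_trans hTA' hA'sub, hTconn, hTcard, ψ, ?_, ?_⟩
      · intro e' he'
        by_cases hxe : e' = e
        · subst hxe
          rw [hψ]
          simp only [if_pos rfl]
          rcases hend with ⟨h1, _⟩ | ⟨h1, _⟩
          · exact Or.inl h1.symm
          · exact Or.inr h1.symm
        · have : e' ∈ A' \ T := by
            rw [Finset.mem_sdiff] at he' ⊢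
            exact ⟨Finset.mem_erase.2 ⟨hxe, he'.1⟩, he'.2⟩
          have h := hmem' e' this
          rw [hψ]
          simp only [if_neg hxe]
          exact h
      · intro w
        rw [hsplit, Finset.sum_insert henotin]
        have hpt : ∀ x ∈ A' \ T, (if ψ x = w then (1:ℤ) else 0)
            = (if ψ' x = w then (1:ℤ) else 0) := by
          intro x hx
          have hxe : x ≠ e := fun h => henotin (h ▸ hx)
          rw [hψ]
          simp [hxe]
        rw [Finset.sum_congr rfl hpt, hcount' w]
        rw [hψ]
        simp only [if_pos rfl]
        show (if v = w then (1:ℤ) else 0) + b' w = b w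
        rw [hb']
        by_cases hwv : w = v
        · subst hwv
          simp
        · have h1 : ¬ (v = w) := fun h => hwv h.symm
          simp [h1, hwv]

end HallMain

end BreakProof

/-- Every divisor of degree `g` on a finite connected multigraph of genus `g`
(with all vertex weights zero) is linearly equivalent to a break divisor. -/
theorem stmt12 (g : ℤ) (G : MGraph) (hw : ∀ v, G.w v = 0)
    (hconn : G.Connected) (hgen : G.genus = g)
    (D : G.V → ℤ) (hdeg : G.degD D = g) :
    ∃ f : G.V → ℤ, G.IsBreakDivisor (fun v => D v - G.lap f v) := by
  classical
  haveI : Nonempty G.V := hconn.1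
  have hw0 : ∑ v : G.V, (G.w v : ℤ) = 0 :=
    Finset.sum_eq_zero (fun v _ => by rw [hw v]; simp)
  have hD : ∑ v, D v = (Fintype.card G.E : ℤ) - (Fintype.card G.V : ℤ) + 1 := by
    have h1 := hgen
    have h2 := hdeg
    unfold MGraph.genus at h1
    unfold MGraph.degD at h2
    rw [hw0] at h1
    omega
  obtain ⟨f, hex⟩ := BreakProof.step1 D hconn hD
  have hloopless : ∀ e ∈ BreakProof.A0 G, G.s e ≠ G.t e := by
    intro e he
    exact (Finset.mem_filter.1 he).2
  obtain ⟨T, hTA, hTconn, hTcard, ψ, hmem, hcount⟩ :=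
    BreakProof.hall_main (BreakProof.A0 G).card (BreakProof.A0 G) (BreakProof.bOf G D f)
      rfl hloopless hex (BreakProof.sum_bOf D hD f)
  set φ : G.E → G.V := fun e => if e ∈ (BreakProof.A0 G) \ T then ψ e else G.s e with hφ
  have hsplit : Finset.univ \ T = ((BreakProof.A0 G) \ T) ∪ (BreakProof.Loops G) := by
    ext e
    simp only [Finset.mem_sdiff, Finset.mem_univ, true_and, Finset.mem_union]
    constructor
    · intro heT
      by_cases hl : G.s e = G.t e
      · refine Or.inr ?_
        unfold BreakProof.Loops
        simp [hl]
      · refine Or.inl ⟨?_, heT⟩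
        unfold BreakProof.A0
        simp [hl]
    · rintro (⟨_, h⟩ | h)
      · exact h
      · intro hT
        have h1 := hTA hT
        unfold BreakProof.A0 at h1
        unfold BreakProof.Loops at h
        simp only [Finset.mem_filter, Finset.mem_univ, true_and] at h1 h
        exact h1 h
  have hdisj : Disjoint ((BreakProof.A0 G) \ T) (BreakProof.Loops G) := by
    rw [Finset.disjoint_left]
    intro e he hl
    have h1 := (Finset.mem_sdiff.1 he).1
    unfold BreakProof.A0 at h1
    unfold BreakProof.Loops at hl
    simp only [Finset.mem_filter, Finset.mem_univ, true_and] at h1 hl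
    exact h1 hl
  refine ⟨f, T, φ, ⟨hTconn, hTcard⟩, ?_, ?_⟩
  · intro e heT
    by_cases he : e ∈ (BreakProof.A0 G) \ T
    · rw [hφ]
      simp only [if_pos he]
      exact hmem e he
    · rw [hφ]
      simp only [if_neg he]
      exact Or.inl trivial
  · intro v
    have hfilter : (Finset.univ \ T).filter (fun e => φ e = v)
        = ((BreakProof.A0 G) \ T).filter (fun e => ψ e = v)
          ∪ (BreakProof.Loops G).filter (fun e => G.s e = v) := by
      rw [hsplit, Finset.filter_union]
      congr 1
      · refine Finset.filter_congr (fun e he => ?_)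
        rw [hφ]
        simp only [if_pos he]
      · refine Finset.filter_congr (fun e he => ?_)
        have hne : e ∉ (BreakProof.A0 G) \ T := fun hmem2 =>
          (Finset.disjoint_left.1 hdisj) hmem2 he
        rw [hφ]
        simp only [if_neg hne]
    have hdisjf : Disjoint (((BreakProof.A0 G) \ T).filter (fun e => ψ e = v))
        ((BreakProof.Loops G).filter (fun e => G.s e = v)) :=
      Disjoint.mono (Finset.filter_subset _ _) (Finset.filter_subset _ _) hdisj
    have h1 : (((((BreakProof.A0 G) \ T).filter (fun e => ψ e = v))).card : ℤ)
        = BreakProof.bOf G D f v := by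
      rw [Finset.card_filter]
      push_cast
      exact hcount v
    have h2 : ((BreakProof.Loops G).filter (fun e => G.s e = v))
        = Finset.univ.filter (fun e => G.s e = G.t e ∧ G.s e = v) := by
      unfold BreakProof.Loops
      rw [Finset.filter_filter]
    rw [hfilter, Finset.card_union_of_disjoint hdisjf, hw v]
    push_cast
    rw [h1, h2]
    have h3 : ((Finset.univ.filter (fun e : G.E => G.s e = G.t e ∧ G.s e = v)).card : ℤ)
        = BreakProof.nloops G v := rfl
    rw [h3]
    unfold BreakProof.bOf
    ring
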